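/- Let R : X → X be linear and nonexpansive with V := Fix R a proper closed subspace of X, let β ∈ [0,1], and set T := (1-β)Id + βR. Then κ(T) = β · κ(P_{V⊥} ∘ R restricted to V⊥), where P_{V⊥} is the orthogonal projection onto V⊥ and κ denotes the modulus of averagedness. -/

import Mathlib

open Set

variable {X : Type*} [NormedAddCommGroup X] [InnerProductSpace ℝ X] [CompleteSpace X]

def Nonexpansive {Y : Type*} [NormedAddCommGroup Y] [InnerProductSpace ℝ Y]
    (T : Y → Y) : Prop := ∀ x y, ‖T x - T y‖ ≤ ‖x - y‖

def IsAveraged {Y : Type*} [NormedAddCommGroup Y] [InnerProductSpace ℝ Y]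
    (T : Y → Y) (κ : ℝ) : Prop :=
  ∃ N : Y → Y, Nonexpansive N ∧ ∀ x, T x = (1 - κ) • x + κ • N x

set_option maxHeartbeats 1000000 in
open RealInnerProductSpace in
/-- If `R` is linear and nonexpansive with fixed point set `V ⊊ X`, `β ∈ [0,1]`, and
`T = (1-β)Id + βR`, then `κ(T) = β·κ(S)` where `S = P_{V⊥} R |_{V⊥}` is characterized by
`S : V⊥ → V⊥` with `R v - S v ∈ V` for all `v ∈ V⊥`. -/
theorem modulus_underrelaxed (R : X →L[ℝ] X) (hR : ‖R‖ ≤ 1)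
    (V : Submodule ℝ X) (hV : V = LinearMap.ker ((ContinuousLinearMap.id ℝ X - R : X →L[ℝ] X) : X →ₗ[ℝ] X))
    (hVne : V ≠ ⊤) (β : ℝ) (hβ : β ∈ Icc (0 : ℝ) 1)
    (S : Vᗮ → Vᗮ) (hS : ∀ v : Vᗮ, R (v : X) - (S v : X) ∈ V)
    (κS : ℝ) (hκS : IsLeast {κ : ℝ | κ ∈ Icc (0 : ℝ) 1 ∧ IsAveraged S κ} κS) :
    IsLeast {κ : ℝ | κ ∈ Icc (0 : ℝ) 1 ∧
        IsAveraged (fun x : X => (1 - β) • x + β • R x) κ} (β * κS) := by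
  obtain ⟨hβ0, hβ1⟩ := hβ
  obtain ⟨⟨⟨hκS0, hκS1⟩, hSav⟩, hκSlb⟩ := hκS
  have hVclosed : IsClosed (V : Set X) := by
    rw [hV]; exact ContinuousLinearMap.isClosed_ker _
  haveI : CompleteSpace V := hVclosed.completeSpace_coe
  -- R fixes V
  have hfix : ∀ p ∈ V, R p = p := by
    intro p hp
    rw [hV, LinearMap.mem_ker] at hp
    have h : p - R p = 0 := by simpa using hp
    have := sub_eq_zero.mp h
    exact this.symm
  -- the adjoint fixes V
  have hAp : ∀ p ∈ V, ContinuousLinearMap.adjoint R p = p := by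
    intro p hp
    set A := ContinuousLinearMap.adjoint R with hA
    have hAnorm : ‖A p‖ ≤ ‖p‖ := by
      calc ‖A p‖ ≤ ‖A‖ * ‖p‖ := A.le_opNorm p
        _ ≤ 1 * ‖p‖ := by
            have h1 : ‖A‖ = ‖R‖ := ContinuousLinearMap.adjoint.norm_map R
            exact mul_le_mul_of_nonneg_right (h1 ▸ hR) (norm_nonneg p)
        _ = ‖p‖ := one_mul _
    have hinner : ⟪A p, p⟫ = ‖p‖ ^ 2 := by
      rw [hA, ContinuousLinearMap.adjoint_inner_left R p p, hfix p hp,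
        real_inner_self_eq_norm_sq]
    have hsq : ‖A p - p‖ ^ 2 ≤ 0 := by
      rw [norm_sub_sq_real, hinner]; nlinarith [norm_nonneg (A p), norm_nonneg p]
    have h0 : ‖A p - p‖ = 0 := by nlinarith [norm_nonneg (A p - p)]
    exact sub_eq_zero.mp (norm_eq_zero.mp h0)
  -- Vᗮ is R-invariant
  have hperp : ∀ q ∈ Vᗮ, R q ∈ Vᗮ := by
    intro q hq
    rw [Submodule.mem_orthogonal]
    intro u hu
    have h1 : ⟪ContinuousLinearMap.adjoint R u, q⟫ = ⟪u, R q⟫ :=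
      ContinuousLinearMap.adjoint_inner_left R q u
    rw [hAp u hu] at h1
    rw [← h1]
    exact (Submodule.mem_orthogonal V q).mp hq u hu
  -- S agrees with R on Vᗮ
  have hSR : ∀ v : Vᗮ, (S v : X) = R v := by
    intro v
    have h1 : R ↑v - ↑(S v) ∈ V := hS v
    have h2 : R ↑v - ↑(S v) ∈ Vᗮ := Vᗮ.sub_mem (hperp _ v.2) (S v).2
    have h3 : R ↑v - ↑(S v) = 0 :=
      inner_self_eq_zero.mp ((Submodule.mem_orthogonal V _).mp h2 _ h1)
    have := sub_eq_zero.mp h3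
    exact this.symm
  have hβκS1 : β * κS ≤ 1 := mul_le_one₀ hβ1 hκS0 hκS1
  constructor
  · refine ⟨⟨mul_nonneg hβ0 hκS0, hβκS1⟩, ?_⟩
    rcases eq_or_lt_of_le hβ0 with hβz | hβpos
    · refine ⟨id, fun x y => le_refl _, ?_⟩
      intro x
      simp [← hβz]
    · obtain ⟨M, hM, hMeq⟩ := hSav
      set P := V.orthogonalProjectionOnto with hP
      set Q := Vᗮ.orthogonalProjectionOnto with hQ
      refine ⟨fun x => (P x : X) + (M (Q x) : X), ?_, ?_⟩
      · intro x y
        have pyth : ∀ (a : V) (b : Vᗮ), ‖(a : X) + (b : X)‖ ^ 2 = ‖(a : X)‖ ^ 2 + ‖(b : X)‖ ^ 2 := by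
          intro a b
          rw [norm_add_sq_real, (Submodule.mem_orthogonal V (b : X)).mp b.2 (a : X) a.2]
          ring
        have hdiff : (P x : X) + (M (Q x) : X) - ((P y : X) + (M (Q y) : X))
            = ((P x - P y : V) : X) + ((M (Q x) - M (Q y) : Vᗮ) : X) := by
          push_cast; abel
        rw [hdiff]
        have hMle : ‖M (Q x) - M (Q y)‖ ≤ ‖Q x - Q y‖ := hM _ _
        have hsq : ‖((P x - P y : V) : X) + ((M (Q x) - M (Q y) : Vᗮ) : X)‖ ^ 2 ≤ ‖x - y‖ ^ 2 := by
          rw [pyth]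
          have hpq : ‖x - y‖ ^ 2 = ‖P (x - y)‖ ^ 2 + ‖Q (x - y)‖ ^ 2 := by
            rw [hP, hQ]; exact Submodule.norm_sq_eq_add_norm_sq_projection (x - y) V
          rw [hpq]
          have h1 : ‖((P x - P y : V) : X)‖ = ‖P (x - y)‖ := by
            rw [← map_sub]; exact (Submodule.coe_norm _).symm
          have h2 : ‖((M (Q x) - M (Q y) : Vᗮ) : X)‖ ≤ ‖Q (x - y)‖ := by
            rw [← Submodule.coe_norm]
            calc ‖M (Q x) - M (Q y)‖ ≤ ‖Q x - Q y‖ := hMle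
              _ = ‖Q (x - y)‖ := by rw [map_sub]
          have h3 : (0:ℝ) ≤ ‖((M (Q x) - M (Q y) : Vᗮ) : X)‖ := norm_nonneg _
          have h2sq : ‖((M (Q x) - M (Q y) : Vᗮ) : X)‖ ^ 2 ≤ ‖Q (x - y)‖ ^ 2 :=
            pow_le_pow_left₀ h3 h2 2
          rw [h1]
          linarith
        have := (pow_le_pow_iff_left₀ (norm_nonneg _) (norm_nonneg _) two_ne_zero).mp hsq
        exact this
      · intro x
        have hx : (↑(P x) : X) + ↑(Q x) = x :=
          Submodule.starProjection_add_starProjection_orthogonal (K := V) x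
        have hRq : R ↑(Q x) = (1 - κS) • (↑(Q x) : X) + κS • (↑(M (Q x)) : X) := by
          rw [← hSR (Q x), hMeq (Q x)]
          push_cast
          first
          | rfl
          | abel
        have hp : (↑(P x) : X) = x - ↑(Q x) := eq_sub_of_add_eq hx
        have hRx : R x = (↑(P x) : X) + ((1 - κS) • (↑(Q x) : X) + κS • (↑(M (Q x)) : X)) := by
          conv_lhs => rw [← hx]
          rw [map_add, hfix _ (P x).2, hRq]
        rw [hp] at hRx
        show (1 - β) • x + β • R x = (1 - β * κS) • x + (β * κS) • ((↑(P x) : X) + ↑(M (Q x)))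
        rw [hRx, hp]
        module
  · rintro κ ⟨⟨hκ0, hκ1⟩, N, hN, hNeq⟩
    rcases eq_or_lt_of_le hβ0 with hβz | hβpos
    · rw [← hβz, zero_mul]; exact hκ0
    have hexx : ∃ x, x ∉ V := by
      by_contra h
      push_neg at h
      exact hVne (Submodule.eq_top_iff'.mpr h)
    obtain ⟨x₀, hx₀⟩ := hexx
    have hκpos : 0 < κ := by
      rcases eq_or_lt_of_le hκ0 with hκz | h
      · exfalso
        have h : (1 - β) • x₀ + β • R x₀ = (1 - κ) • x₀ + κ • N x₀ := hNeq x₀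
        rw [← hκz] at h
        simp only [sub_zero, one_smul, zero_smul, add_zero] at h
        have h2 : β • (R x₀ - x₀) = 0 := by
          have h3 : (1 - β) • x₀ + β • R x₀ - x₀ = β • (R x₀ - x₀) := by module
          rw [← h3, h, sub_self]
        have h4 : R x₀ - x₀ = 0 :=
          (smul_eq_zero.mp h2).resolve_left (ne_of_gt hβpos)
        apply hx₀
        rw [hV, LinearMap.mem_ker]
        have h5 := sub_eq_zero.mp h4
        simp [h5]
      · exact h
    by_cases hβκ : β < κ
    · calc β * κS ≤ β * 1 := mul_le_mul_of_nonneg_left hκS1 hβ0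
        _ = β := mul_one β
        _ ≤ κ := le_of_lt hβκ
    push_neg at hβκ
    have hNform : ∀ z : X, N z = z + (β / κ) • (R z - z) := by
      intro z
      have h : (1 - β) • z + β • R z = (1 - κ) • z + κ • N z := hNeq z
      have hκN : κ • N z = (κ - β) • z + β • R z := by
        have h3 : κ • N z = ((1 - κ) • z + κ • N z) - (1 - κ) • z := by module
        rw [h3, ← h]
        module
      apply smul_right_injective X (ne_of_gt hκpos)
      show κ • N z = κ • (z + (β / κ) • (R z - z))
      rw [hκN]
      match_scalars <;> field_simp <;> ring
    have hNperp : ∀ v : Vᗮ, N ↑v ∈ Vᗮ := by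
      intro v
      rw [hNform]
      exact Vᗮ.add_mem v.2 (Submodule.smul_mem _ _ (Vᗮ.sub_mem (hperp _ v.2) v.2))
    set M : Vᗮ → Vᗮ := fun v => ⟨N ↑v, hNperp v⟩ with hMdef
    have hMnon : Nonexpansive M := by
      intro v w
      have h := hN ↑v ↑w
      simp only [Submodule.coe_norm, hMdef, AddSubgroupClass.coe_sub]
      exact h
    have hav : IsAveraged S (κ / β) := by
      refine ⟨M, hMnon, ?_⟩
      intro v
      apply Subtype.ext
      show (S v : X) = ((1 - κ / β) • v + (κ / β) • M v : Vᗮ)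
      push_cast
      rw [hSR v]
      show R ↑v = (1 - κ / β) • (↑v : X) + (κ / β) • N ↑v
      rw [hNform]
      match_scalars <;> field_simp <;> ring
    have hmem : κ / β ∈ Icc (0:ℝ) 1 := ⟨div_nonneg hκ0 hβ0, (div_le_one hβpos).mpr hβκ⟩
    have hle : κS ≤ κ / β := hκSlb ⟨hmem, hav⟩
    rw [mul_comm]
    calc κS * β ≤ (κ / β) * β := mul_le_mul_of_nonneg_right hle hβ0
      _ = κ := by field_simp
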